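/- arXiv:1403.4491 — 6 statements merged into one kernel-verified Lean document; each statement's English description precedes it below -/
import Mathlib

section
/- Let 0 ≤ p ≤ 1, q ∈ ℝ, 0 ≤ Δ₂ ≤ Δ₁ ≤ t, Δ > 0, and define J_{p,q}(Δ₁, Δ₂, Δ) = ∫_{t-Δ₁}^{t-Δ₂} (t-s)^q · min(1, Δ/(t-s))^p ds. If q > p - 1, then J_{p,q}(Δ₁, Δ₂, Δ) ≤ (2/(q+1-p)) · (min(Δ, Δ₁))^p · Δ₁^{q+1-p}. -/
open Real intervalIntegral

/-- Lemma 4.1(a): bound on J_{p,q}(Δ₁,Δ₂,Δ) when q > p - 1. -/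
theorem J_bound_case_a (p q t Δ₁ Δ₂ Δ : ℝ)
    (hp0 : 0 ≤ p) (hp1 : p ≤ 1)
    (h20 : 0 ≤ Δ₂) (h21 : Δ₂ ≤ Δ₁) (h1t : Δ₁ ≤ t) (hΔ : 0 < Δ)
    (hq : p - 1 < q) :
    (∫ s in (t - Δ₁)..(t - Δ₂), (t - s) ^ q * (min 1 (Δ / (t - s))) ^ p) ≤
      2 / (q + 1 - p) * (min Δ Δ₁) ^ p * Δ₁ ^ (q + 1 - p) := by
  set C : ℝ := (min Δ Δ₁) ^ p with hCdef
  have hC : 0 ≤ C := Real.rpow_nonneg (le_min hΔ.le (h20.trans h21)) p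
  have hqp : (-1 : ℝ) < q - p := by linarith
  have hqp' : (0:ℝ) < q - p + 1 := by linarith
  set f : ℝ → ℝ := fun u => u ^ q * (min 1 (Δ / u)) ^ p with hfdef
  set g : ℝ → ℝ := fun u => C * u ^ (q - p) with hgdef
  -- step 1 : substitution u = t - s
  have hsub : (∫ s in (t - Δ₁)..(t - Δ₂), (t - s) ^ q * (min 1 (Δ / (t - s))) ^ p)
      = ∫ u in Δ₂..Δ₁, f u := by
    have h := intervalIntegral.integral_comp_sub_left (a := t - Δ₁) (b := t - Δ₂) f t
    rw [show t - (t - Δ₂) = Δ₂ by ring, show t - (t - Δ₁) = Δ₁ by ring] at h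
    exact h
  rw [hsub]
  -- pointwise bound
  have hfg : ∀ u ∈ Set.Icc Δ₂ Δ₁, f u ≤ g u := by
    rintro u ⟨hu1, hu2⟩
    have hu0 : 0 ≤ u := h20.trans hu1
    rcases hu0.eq_or_lt with h0 | hu
    · rw [← h0]
      rcases eq_or_lt_of_le hp0 with hp | hp
      · simp [hfdef, hgdef, hCdef, ← hp, Real.rpow_zero]
      · have hf0 : f 0 = 0 := by
          simp [hfdef, div_zero, min_eq_right (zero_le_one (α := ℝ)),
            Real.zero_rpow hp.ne', mul_zero]
        rw [hf0, hgdef]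
        exact mul_nonneg hC (Real.rpow_nonneg le_rfl _)
    · have hmin : min 1 (Δ / u) = min u Δ / u := by
        rw [← div_self hu.ne', div_eq_mul_inv, div_eq_mul_inv, div_eq_mul_inv,
          ← min_mul_of_nonneg _ _ (inv_nonneg.mpr hu.le)]
      have hmin0 : 0 ≤ min u Δ := le_min hu.le hΔ.le
      have hfu : f u = (min u Δ) ^ p * u ^ (q - p) := by
        simp only [hfdef, hmin, Real.div_rpow hmin0 hu.le, Real.rpow_sub hu]
        ring
      rw [hfu, hgdef]
      apply mul_le_mul_of_nonneg_right _ (Real.rpow_nonneg hu.le _)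
      apply Real.rpow_le_rpow hmin0 _ hp0
      rw [min_comm]
      exact min_le_min le_rfl hu2
  -- integrability of g
  have hg : IntervalIntegrable g MeasureTheory.volume Δ₂ Δ₁ :=
    (intervalIntegral.intervalIntegrable_rpow' hqp).const_mul C
  -- integrability of f
  have hfmeas : Measurable f := by
    apply Measurable.mul
    · exact measurable_id.pow measurable_const
    · exact (measurable_const.min (measurable_const.div measurable_id)).pow measurable_const
  have hf : IntervalIntegrable f MeasureTheory.volume Δ₂ Δ₁ := by
    apply hg.mono_fun hfmeas.aestronglyMeasurable.restrict
    filter_upwards [MeasureTheory.ae_restrict_mem measurableSet_uIoc] with u hu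
    rw [Set.uIoc_of_le h21] at hu
    obtain ⟨hu1, hu2⟩ := hu
    have hupos : 0 < u := lt_of_le_of_lt h20 hu1
    have hf0 : 0 ≤ f u := mul_nonneg (Real.rpow_nonneg hupos.le _)
      (Real.rpow_nonneg (le_min zero_le_one (div_nonneg hΔ.le hupos.le)) _)
    have hg0 : 0 ≤ g u := mul_nonneg hC (Real.rpow_nonneg hupos.le _)
    rw [Real.norm_eq_abs, Real.norm_eq_abs, abs_of_nonneg hf0, abs_of_nonneg hg0]
    exact hfg u ⟨hu1.le, hu2⟩
  have hmono := intervalIntegral.integral_mono_on h21 hf hg hfg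
  refine hmono.trans ?_
  have hgint : (∫ u in Δ₂..Δ₁, g u)
      = C * ((Δ₁ ^ (q - p + 1) - Δ₂ ^ (q - p + 1)) / (q - p + 1)) := by
    rw [hgdef]
    rw [intervalIntegral.integral_const_mul]
    rw [integral_rpow (Or.inl hqp)]
  rw [hgint]
  have h2nn : 0 ≤ Δ₂ ^ (q - p + 1) := Real.rpow_nonneg h20 _
  have h1nn : 0 ≤ Δ₁ ^ (q - p + 1) := Real.rpow_nonneg (h20.trans h21) _
  have heq : q + 1 - p = q - p + 1 := by ring
  rw [heq]
  have key : C * (Δ₁ ^ (q - p + 1) - Δ₂ ^ (q - p + 1)) ≤ 2 * C * Δ₁ ^ (q - p + 1) := by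
    nlinarith [mul_nonneg hC h1nn, mul_nonneg hC h2nn]
  calc C * ((Δ₁ ^ (q - p + 1) - Δ₂ ^ (q - p + 1)) / (q - p + 1))
      = C * (Δ₁ ^ (q - p + 1) - Δ₂ ^ (q - p + 1)) / (q - p + 1) := by ring
    _ ≤ 2 * C * Δ₁ ^ (q - p + 1) / (q - p + 1) := by gcongr
    _ = 2 / (q - p + 1) * C * Δ₁ ^ (q - p + 1) := by ring
end

section
/- Let 0 ≤ p ≤ 1, -1 < q < p - 1, 0 ≤ Δ₂ ≤ Δ₁ ≤ t, Δ > 0. Then J_{p,q}(Δ₁, Δ₂, Δ) = ∫_{t-Δ₁}^{t-Δ₂} (t-s)^q min(1, Δ/(t-s))^p ds ≤ ((p-1-q)^{-1} + (q+1)^{-1}) · Δ^p · (max(Δ, Δ₂))^{q-p+1}. -/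
open Real intervalIntegral MeasureTheory

/-- Lemma 4.1(b): bound on J_{p,q}(Δ₁,Δ₂,Δ) when -1 < q < p - 1. -/
theorem J_bound_case_b (p q t Δ₁ Δ₂ Δ : ℝ)
    (hp0 : 0 ≤ p) (hp1 : p ≤ 1)
    (h20 : 0 ≤ Δ₂) (h21 : Δ₂ ≤ Δ₁) (h1t : Δ₁ ≤ t) (hΔ : 0 < Δ)
    (hq1 : -1 < q) (hq2 : q < p - 1) :
    (∫ s in (t - Δ₁)..(t - Δ₂), (t - s) ^ q * (min 1 (Δ / (t - s))) ^ p) ≤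
      ((p - 1 - q)⁻¹ + (q + 1)⁻¹) * Δ ^ p * (max Δ Δ₂) ^ (q - p + 1) := by
  have hq1' : (0:ℝ) < q + 1 := by linarith
  have hr : q - p + 1 < 0 := by linarith
  have hpq : 0 < p - 1 - q := by linarith
  set c : ℝ := max Δ₂ (min Δ Δ₁) with hc
  set M : ℝ := max Δ Δ₂ with hM
  have hc2 : Δ₂ ≤ c := le_max_left _ _
  have hc1 : c ≤ Δ₁ := max_le h21 (min_le_right _ _)
  have hc0 : 0 ≤ c := le_trans h20 hc2
  have hM0 : 0 < M := lt_of_lt_of_le hΔ (le_max_left _ _)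
  have hMr : 0 < M ^ (q - p + 1) := rpow_pos_of_pos hM0 _
  have hΔp : 0 < Δ ^ p := rpow_pos_of_pos hΔ _
  set a : ℝ := t - Δ₁ with ha
  set m : ℝ := t - c with hmdef
  set b : ℝ := t - Δ₂ with hb
  have ham : a ≤ m := by rw [ha, hmdef]; linarith
  have hmb : m ≤ b := by rw [hmdef, hb]; linarith
  have hab : a ≤ b := le_trans ham hmb
  set f : ℝ → ℝ := fun s => (t - s) ^ q * (min 1 (Δ / (t - s))) ^ p with hf
  -- pointwise bounds
  have hf_nonneg : ∀ s ∈ Set.Icc a b, 0 ≤ f s := by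
    intro s hs
    have hu : 0 ≤ t - s := by have := hs.2; rw [hb] at this; linarith
    exact mul_nonneg (rpow_nonneg hu _)
      (rpow_nonneg (le_min zero_le_one (div_nonneg hΔ.le hu)) _)
  have hptA : ∀ s ∈ Set.Icc a b, f s ≤ (t - s) ^ q := by
    intro s hs
    have hu : 0 ≤ t - s := by have := hs.2; rw [hb] at this; linarith
    have hmin0 : 0 ≤ min 1 (Δ / (t - s)) :=
      le_min zero_le_one (div_nonneg hΔ.le hu)
    calc f s ≤ (t - s) ^ q * 1 := by
          apply mul_le_mul_of_nonneg_left _ (rpow_nonneg hu q)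
          exact rpow_le_one hmin0 (min_le_left _ _) hp0
      _ = (t - s) ^ q := mul_one _
  have hptB : ∀ s ∈ Set.Icc a m, f s ≤ Δ ^ p * (t - s) ^ (q - p) := by
    intro s hs
    have hu : c ≤ t - s := by have := hs.2; rw [hmdef] at this; linarith
    rcases eq_or_lt_of_le (le_trans hc0 hu) with h0 | h0
    · rw [hf]
      simp only [← h0, Real.zero_rpow (by linarith : q ≠ 0),
        Real.zero_rpow (by linarith : q - p ≠ 0), zero_mul, mul_zero]
      exact le_refl 0
    · have hmin0 : 0 ≤ min 1 (Δ / (t - s)) :=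
        le_min zero_le_one (div_nonneg hΔ.le h0.le)
      calc f s ≤ (t - s) ^ q * (Δ / (t - s)) ^ p := by
            apply mul_le_mul_of_nonneg_left _ (rpow_nonneg h0.le q)
            exact rpow_le_rpow hmin0 (min_le_right _ _) hp0
        _ = Δ ^ p * (t - s) ^ (q - p) := by
            rw [div_rpow hΔ.le h0.le, rpow_sub h0]
            ring
  -- integrability of the bounding function (t-s)^q on [a,b]
  have hg_int : IntervalIntegrable (fun s => (t - s) ^ q) volume a b := by
    have h1 := (intervalIntegrable_rpow' (a := Δ₂) (b := Δ₁) hq1).comp_sub_left t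
    exact (h1.symm : _)
  -- measurability of f
  have hf_meas : ∀ (u v : ℝ), AEStronglyMeasurable f (volume.restrict (Set.uIoc u v)) := by
    intro u v
    apply Measurable.aestronglyMeasurable
    fun_prop
  -- integrability of f on [a,b]
  have hf_int : IntervalIntegrable f volume a b := by
    apply hg_int.mono_fun (hf_meas a b)
    rw [Filter.EventuallyLE, ae_restrict_iff' measurableSet_uIoc]
    apply Filter.Eventually.of_forall
    intro s hs
    have hs' : s ∈ Set.Icc a b := by
      rw [Set.uIoc_of_le hab] at hs
      exact ⟨hs.1.le, hs.2⟩
    have h0 := hf_nonneg s hs'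
    have hu : 0 ≤ t - s := by have := hs'.2; rw [hb] at this; linarith
    simp only [Real.norm_eq_abs, abs_of_nonneg h0, abs_of_nonneg (rpow_nonneg hu q)]
    exact hptA s hs'
  have hf_int1 : IntervalIntegrable f volume a m :=
    hf_int.mono_set (by rw [Set.uIcc_of_le ham, Set.uIcc_of_le hab]
                        exact Set.Icc_subset_Icc le_rfl hmb)
  have hf_int2 : IntervalIntegrable f volume m b :=
    hf_int.mono_set (by rw [Set.uIcc_of_le hmb, Set.uIcc_of_le hab]
                        exact Set.Icc_subset_Icc ham le_rfl)
  have hg_int2 : IntervalIntegrable (fun s => (t - s) ^ q) volume m b :=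
    hg_int.mono_set (by rw [Set.uIcc_of_le hmb, Set.uIcc_of_le hab]
                        exact Set.Icc_subset_Icc ham le_rfl)
  -- bound on second piece
  have B2 : (∫ s in m..b, f s) ≤ Δ ^ p * M ^ (q - p + 1) / (q + 1) := by
    have step1 : (∫ s in m..b, f s) ≤ ∫ s in m..b, (t - s) ^ q := by
      apply integral_mono_on hmb hf_int2 hg_int2
      intro s hs
      exact hptA s ⟨le_trans ham hs.1, hs.2⟩
    have step2 : (∫ s in m..b, (t - s) ^ q) = (c ^ (q+1) - Δ₂ ^ (q+1)) / (q+1) := by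
      have h1 : (∫ s in m..b, (t - s) ^ q) = ∫ u in Δ₂..c, u ^ q := by
        have := integral_comp_sub_left (a := m) (b := b) (fun u => u ^ q) t
        rw [this, hmdef, hb]
        norm_num
      rw [h1, integral_rpow (Or.inl hq1)]
    have step3 : c ^ (q+1) - Δ₂ ^ (q+1) ≤ Δ ^ p * M ^ (q - p + 1) := by
      rcases le_or_gt Δ₂ Δ with h | h
      · have hcΔ : c ≤ Δ := max_le h (min_le_left _ _)
        have hMΔ : M = Δ := max_eq_left h
        have : c ^ (q+1) ≤ Δ ^ (q+1) := rpow_le_rpow hc0 hcΔ hq1'.le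
        have hsplit : Δ ^ (q+1) = Δ ^ p * Δ ^ (q - p + 1) := by
          rw [← rpow_add hΔ]; ring_nf
        have h2 : 0 ≤ Δ₂ ^ (q+1) := rpow_nonneg h20 _
        rw [hMΔ]
        linarith
      · have hcΔ₂ : c = Δ₂ := by
          rw [hc]
          exact max_eq_left (le_trans (min_le_left _ _) (le_of_lt h))
        rw [hcΔ₂]
        simp only [sub_self]
        positivity
    calc (∫ s in m..b, f s) ≤ (c ^ (q+1) - Δ₂ ^ (q+1)) / (q+1) := by
          rw [← step2]; exact step1
      _ ≤ Δ ^ p * M ^ (q - p + 1) / (q + 1) := by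
          gcongr
  -- bound on first piece
  have B1 : (∫ s in a..m, f s) ≤ Δ ^ p * M ^ (q - p + 1) / (p - 1 - q) := by
    rcases eq_or_lt_of_le hc1 with hceq | hclt
    · have : a = m := by rw [ha, hmdef, hceq]
      rw [← this, integral_same]
      positivity
    · -- here c < Δ₁, hence Δ ≤ Δ₁ and c = M
      have hΔΔ₁ : Δ ≤ Δ₁ := by
        by_contra hcon
        push_neg at hcon
        have : min Δ Δ₁ = Δ₁ := min_eq_right hcon.le
        rw [hc, this, max_eq_right h21] at hclt
        exact lt_irrefl _ hclt
      have hcM : c = M := by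
        rw [hc, hM, min_eq_left hΔΔ₁, max_comm]
      have hcpos : 0 < c := by rw [hcM]; exact hM0
      have hΔ₁pos : 0 < Δ₁ := lt_of_lt_of_le hcpos hc1
      have hh_int : IntervalIntegrable (fun s => Δ ^ p * (t - s) ^ (q - p)) volume a m := by
        apply ContinuousOn.intervalIntegrable
        apply ContinuousOn.mul continuousOn_const
        apply ContinuousOn.rpow_const
        · exact (continuous_const.sub continuous_id).continuousOn
        · intro s hs
          rw [Set.uIcc_of_le ham] at hs
          left
          have : c ≤ t - s := by have := hs.2; rw [hmdef] at this; linarith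
          exact ne_of_gt (lt_of_lt_of_le hcpos this)
      have step1 : (∫ s in a..m, f s) ≤ ∫ s in a..m, Δ ^ p * (t - s) ^ (q - p) :=
        integral_mono_on ham hf_int1 hh_int hptB
      have step2 : (∫ s in a..m, Δ ^ p * (t - s) ^ (q - p))
          = Δ ^ p * ((Δ₁ ^ (q - p + 1) - c ^ (q - p + 1)) / (q - p + 1)) := by
        rw [intervalIntegral.integral_const_mul]
        congr 1
        have h1 : (∫ s in a..m, (t - s) ^ (q - p)) = ∫ u in c..Δ₁, u ^ (q - p) := by
          have := integral_comp_sub_left (a := a) (b := m) (fun u => u ^ (q - p)) t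
          rw [this, hmdef, ha]
          norm_num
        rw [h1, integral_rpow]
        right
        constructor
        · linarith
        · rw [Set.uIcc_of_le hc1]
          intro hcon
          exact absurd hcon.1 (not_le.mpr hcpos)
      have step3 : (Δ₁ ^ (q - p + 1) - c ^ (q - p + 1)) / (q - p + 1)
          ≤ M ^ (q - p + 1) / (p - 1 - q) := by
        have hd1 : 0 ≤ Δ₁ ^ (q - p + 1) := rpow_nonneg hΔ₁pos.le _
        have heq : (Δ₁ ^ (q - p + 1) - c ^ (q - p + 1)) / (q - p + 1)
            = (c ^ (q - p + 1) - Δ₁ ^ (q - p + 1)) / (p - 1 - q) := by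
          rw [div_eq_div_iff hr.ne (by linarith : p - 1 - q ≠ 0)]
          ring
        rw [heq, hcM]
        gcongr (?_ : ℝ) / _
        linarith
      calc (∫ s in a..m, f s) ≤ Δ ^ p * ((Δ₁ ^ (q-p+1) - c ^ (q-p+1)) / (q-p+1)) := by
            rw [← step2]; exact step1
        _ ≤ Δ ^ p * (M ^ (q - p + 1) / (p - 1 - q)) :=
            mul_le_mul_of_nonneg_left step3 hΔp.le
        _ = Δ ^ p * M ^ (q - p + 1) / (p - 1 - q) := by ring
  -- combine
  have hsplit : (∫ s in a..b, f s) = (∫ s in a..m, f s) + ∫ s in m..b, f s :=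
    (integral_add_adjacent_intervals hf_int1 hf_int2).symm
  have : (∫ s in a..b, f s) ≤ Δ ^ p * M ^ (q-p+1) / (p-1-q) + Δ ^ p * M ^ (q-p+1) / (q+1) := by
    rw [hsplit]; exact add_le_add B1 B2
  calc (∫ s in (t - Δ₁)..(t - Δ₂), (t - s) ^ q * (min 1 (Δ / (t - s))) ^ p)
      = ∫ s in a..b, f s := rfl
    _ ≤ Δ ^ p * M ^ (q-p+1) / (p-1-q) + Δ ^ p * M ^ (q-p+1) / (q+1) := this
    _ = ((p - 1 - q)⁻¹ + (q + 1)⁻¹) * Δ ^ p * M ^ (q - p + 1) := by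
        field_simp
end

section
/- Let 0 ≤ p ≤ 1, q < -1, 0 < Δ₂ ≤ Δ₁ ≤ t, Δ > 0. Then J_{p,q}(Δ₁, Δ₂, Δ) = ∫_{t-Δ₁}^{t-Δ₂} (t-s)^q min(1, Δ/(t-s))^p ds ≤ 2|q+1|^{-1} · (min(Δ, Δ₂))^p · Δ₂^{q+1-p}. -/
open Real intervalIntegral MeasureTheory

/-- Lemma 4.1(c): bound on J_{p,q}(Δ₁,Δ₂,Δ) when q < -1. -/
theorem J_bound_case_c (p q t Δ₁ Δ₂ Δ : ℝ)
    (hp0 : 0 ≤ p) (hp1 : p ≤ 1)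
    (h20 : 0 < Δ₂) (h21 : Δ₂ ≤ Δ₁) (h1t : Δ₁ ≤ t) (hΔ : 0 < Δ)
    (hq : q < -1) :
    (∫ s in (t - Δ₁)..(t - Δ₂), (t - s) ^ q * (min 1 (Δ / (t - s))) ^ p) ≤
      2 * |q + 1|⁻¹ * (min Δ Δ₂) ^ p * Δ₂ ^ (q + 1 - p) := by
  have hab : t - Δ₁ ≤ t - Δ₂ := by linarith
  set C : ℝ := (min Δ Δ₂) ^ p * Δ₂ ^ (-p) with hC
  have hmin0 : (0:ℝ) ≤ min Δ Δ₂ := le_min hΔ.le h20.le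
  have hCpos : 0 ≤ C := mul_nonneg (rpow_nonneg hmin0 p) (rpow_nonneg h20.le _)
  have hne : ∀ s ∈ Set.uIcc (t - Δ₁) (t - Δ₂), (0:ℝ) < t - s := by
    intro s hs
    rw [Set.uIcc_of_le hab] at hs
    have := hs.2
    have := hs.1
    linarith
  -- pointwise bound on Icc
  have hpt : ∀ s ∈ Set.Icc (t - Δ₁) (t - Δ₂),
      (t - s) ^ q * (min 1 (Δ / (t - s))) ^ p ≤ C * (t - s) ^ q := by
    intro s hs
    have hu2 : Δ₂ ≤ t - s := by linarith [hs.2]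
    have hu : (0:ℝ) < t - s := lt_of_lt_of_le h20 hu2
    have hmin : min 1 (Δ / (t - s)) ≤ min Δ Δ₂ / Δ₂ := by
      rcases le_total Δ₂ Δ with h | h
      · rw [min_eq_right h, div_self h20.ne']
        exact min_le_left _ _
      · rw [min_eq_left h]
        refine le_trans (min_le_right _ _) ?_
        exact div_le_div_of_nonneg_left hΔ.le h20 hu2
    have h1 : (min 1 (Δ / (t - s))) ^ p ≤ (min Δ Δ₂ / Δ₂) ^ p :=
      rpow_le_rpow (le_min zero_le_one (div_nonneg hΔ.le hu.le)) hmin hp0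
    have h2 : (min Δ Δ₂ / Δ₂) ^ p = C := by
      rw [hC, div_rpow hmin0 h20.le, rpow_neg h20.le, div_eq_mul_inv]
    calc (t - s) ^ q * (min 1 (Δ / (t - s))) ^ p
        ≤ (t - s) ^ q * C := by
          rw [← h2]; exact mul_le_mul_of_nonneg_left h1 (rpow_nonneg hu.le q)
      _ = C * (t - s) ^ q := mul_comm _ _
  -- integrability
  have hcontsub : ContinuousOn (fun s : ℝ => t - s) (Set.uIcc (t - Δ₁) (t - Δ₂)) :=
    (continuous_const.sub continuous_id).continuousOn
  have hcq : ContinuousOn (fun s : ℝ => (t - s) ^ q) (Set.uIcc (t - Δ₁) (t - Δ₂)) :=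
    hcontsub.rpow_const (fun s hs => Or.inl (hne s hs).ne')
  have hint1 : IntervalIntegrable (fun s => (t - s) ^ q * (min 1 (Δ / (t - s))) ^ p)
      volume (t - Δ₁) (t - Δ₂) := by
    apply ContinuousOn.intervalIntegrable
    apply hcq.mul
    apply ContinuousOn.rpow_const
    · exact (continuousOn_const.inf (continuousOn_const.div hcontsub
        (fun s hs => (hne s hs).ne')))
    · intro s hs; exact Or.inr hp0
  have hint2 : IntervalIntegrable (fun s => C * (t - s) ^ q)
      volume (t - Δ₁) (t - Δ₂) :=
    (hcq.const_smul C).intervalIntegrable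
  have key := intervalIntegral.integral_mono_on hab hint1 hint2 hpt
  have hval : (∫ s in (t - Δ₁)..(t - Δ₂), C * (t - s) ^ q)
      = C * ((Δ₁ ^ (q + 1) - Δ₂ ^ (q + 1)) / (q + 1)) := by
    rw [intervalIntegral.integral_const_mul]
    congr 1
    have := intervalIntegral.integral_comp_sub_left (a := t - Δ₁) (b := t - Δ₂)
      (fun u : ℝ => u ^ q) t
    simp only [sub_sub_cancel] at this
    rw [this]
    rw [integral_rpow (Or.inr ⟨by linarith, by
      rw [Set.uIcc_of_le h21]; intro h0; exact absurd h0.1 (not_le.mpr h20)⟩)]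
  rw [hval] at key
  refine le_trans key ?_
  -- final arithmetic
  have habs : |q + 1| = -(q + 1) := abs_of_neg (by linarith)
  have hq1 : (0:ℝ) < -(q + 1) := by linarith
  have hA : (Δ₁ ^ (q + 1) - Δ₂ ^ (q + 1)) / (q + 1) ≤ Δ₂ ^ (q + 1) * |q + 1|⁻¹ := by
    have ha : (0:ℝ) ≤ Δ₁ ^ (q + 1) := rpow_nonneg (by linarith) _
    rw [habs, div_le_iff_of_neg (by linarith : q + 1 < 0)]
    have hmul : Δ₂ ^ (q + 1) * (-(q + 1))⁻¹ * (q + 1) = -Δ₂ ^ (q + 1) := by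
      field_simp
      rw [div_self (ne_of_lt (by linarith : q + 1 < 0))]
    rw [hmul]
    linarith
  have hX : C * ((Δ₁ ^ (q + 1) - Δ₂ ^ (q + 1)) / (q + 1))
      ≤ C * (Δ₂ ^ (q + 1) * |q + 1|⁻¹) := mul_le_mul_of_nonneg_left hA hCpos
  refine le_trans hX ?_
  have hsplit : Δ₂ ^ (q + 1 - p) = Δ₂ ^ (q + 1) * Δ₂ ^ (-p) := by
    rw [← rpow_add h20]; ring_nf
  rw [hsplit, hC]
  have hnn : 0 ≤ |q + 1|⁻¹ * ((min Δ Δ₂) ^ p * (Δ₂ ^ (q + 1) * Δ₂ ^ (-p))) := by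
    positivity
  nlinarith [hnn]
end

section
/- For all t, t' > 0 with t ≤ t' and all w ∈ ℝ, |G_t(w) - G_{t'}(w)| ≤ C · t^{-1} · |t - t'| · (G_t(w) + G_{2t'}(w)) for a universal constant C > 0, where G_t is the one-dimensional heat kernel. -/
open Real

/-- One-dimensional Gaussian heat kernel. -/
noncomputable def G (t x : ℝ) : ℝ := (2 * Real.pi * t) ^ (-(1/2) : ℝ) * Real.exp (-x ^ 2 / (2 * t))

lemma G_pos {t : ℝ} (ht : 0 < t) (x : ℝ) : 0 < G t x := by
  have : 0 < 2 * Real.pi * t := by positivity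
  exact mul_pos (Real.rpow_pos_of_pos this _) (Real.exp_pos _)

lemma x_exp_neg (x : ℝ) (hx : 0 ≤ x) : x * Real.exp (-x) ≤ Real.exp (-(x/2)) := by
  have key : x ≤ Real.exp (x/2) := by
    have h1 : x/4 + 1 ≤ Real.exp (x/4) := Real.add_one_le_exp _
    have h2 : Real.exp (x/4) * Real.exp (x/4) = Real.exp (x/2) := by
      rw [← Real.exp_add]; ring_nf
    nlinarith [Real.exp_pos (x/4), sq_nonneg (1 - x/4)]
  have hpos := Real.exp_pos x
  rw [← mul_le_mul_iff_of_pos_right hpos]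
  have e1 : Real.exp (-x) * Real.exp x = 1 := by rw [← Real.exp_add]; simp
  have e2 : Real.exp (-(x/2)) * Real.exp x = Real.exp (x/2) := by
    rw [← Real.exp_add]; ring_nf
  calc x * Real.exp (-x) * Real.exp x = x * (Real.exp (-x) * Real.exp x) := by ring
    _ = x := by rw [e1]; ring
    _ ≤ Real.exp (x/2) := key
    _ = Real.exp (-(x/2)) * Real.exp x := e2.symm

/-- prefactor comparison -/
lemma pref_le {t t' : ℝ} (ht : 0 < t) (ht' : 0 < t') (h : t' ≤ 2 * t) :
    (2 * Real.pi * t) ^ (-(1/2) : ℝ) ≤ 2 * (2 * Real.pi * (2 * t')) ^ (-(1/2) : ℝ) := by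
  have hpi := Real.pi_pos
  have h4 : (2 : ℝ) * (2 * Real.pi * (2 * t')) ^ (-(1/2) : ℝ)
      = (Real.pi * t') ^ (-(1/2) : ℝ) := by
    have e : (2 * Real.pi * (2 * t') : ℝ) = 4 * (Real.pi * t') := by ring
    rw [e, Real.mul_rpow (by norm_num) (by positivity)]
    have h4r : ((4:ℝ)) ^ (-(1/2) : ℝ) = 1/2 := by
      rw [Real.rpow_neg (by norm_num), ← Real.sqrt_eq_rpow,
        show (4:ℝ) = 2^2 by norm_num, Real.sqrt_sq (by norm_num)]
      norm_num
    rw [h4r]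
    ring
  rw [h4]
  apply Real.rpow_le_rpow_of_nonpos (by positivity) (by nlinarith) (by norm_num)

lemma G_deriv (w : ℝ) {s : ℝ} (hs : 0 < s) :
    HasDerivAt (fun s => G s w) (G s w * (w ^ 2 / (2 * s ^ 2) - 1 / (2 * s))) s := by
  have hbase : 0 < 2 * Real.pi * s := by positivity
  have h1 : HasDerivAt (fun s : ℝ => 2 * Real.pi * s) (2 * Real.pi) s := by
    simpa using (hasDerivAt_id s).const_mul (2 * Real.pi)
  have h2 : HasDerivAt (fun s : ℝ => (2 * Real.pi * s) ^ (-(1/2) : ℝ))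
      (2 * Real.pi * (-(1/2)) * (2 * Real.pi * s) ^ ((-(1/2) : ℝ) - 1)) s :=
    h1.rpow_const (Or.inl hbase.ne')
  have h3 : HasDerivAt (fun s : ℝ => -w ^ 2 / (2 * s)) (w ^ 2 / (2 * s ^ 2)) s := by
    have hinv : HasDerivAt (fun s : ℝ => s⁻¹) (-(s ^ 2)⁻¹) s := hasDerivAt_inv hs.ne'
    have hd := hinv.const_mul (-w ^ 2 / 2)
    have heq : (fun y : ℝ => -w ^ 2 / 2 * y⁻¹) = fun y : ℝ => -w ^ 2 / (2 * y) := by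
      funext y
      rw [div_eq_mul_inv (-w^2) (2*y), mul_inv]
      ring
    rw [heq] at hd
    convert hd using 1
    · rfl
    · rfl
    ring
  have h4 : HasDerivAt (fun s : ℝ => Real.exp (-w ^ 2 / (2 * s)))
      (Real.exp (-w ^ 2 / (2 * s)) * (w ^ 2 / (2 * s ^ 2))) s := h3.exp
  have h5 := h2.mul h4
  convert h5 using 1
  · rfl
  · rfl
  · rfl
  have hsplit : (2 * Real.pi * s) ^ ((-(1/2) : ℝ) - 1)
      = (2 * Real.pi * s) ^ (-(1/2) : ℝ) * (2 * Real.pi * s)⁻¹ := by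
    rw [show ((-(1/2) : ℝ) - 1) = (-(1/2) : ℝ) + (-1) by ring,
      Real.rpow_add hbase, Real.rpow_neg_one]
  rw [hsplit]
  unfold G
  field_simp
  ring

lemma claimB {t t' s : ℝ} (w : ℝ) (ht : 0 < t) (hts : t ≤ s) (hst : s ≤ t') (h2 : t' ≤ 2 * t) :
    G s w * (1 / (2 * s)) ≤ 2 * t⁻¹ * G (2 * t') w := by
  have hs : 0 < s := ht.trans_le hts
  have ht' : 0 < t' := hs.trans_le hst
  have hexp : Real.exp (-w ^ 2 / (2 * s)) ≤ Real.exp (-w ^ 2 / (2 * (2 * t'))) := by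
    apply Real.exp_le_exp.mpr
    rw [div_le_div_iff₀ (by positivity) (by positivity)]
    nlinarith [sq_nonneg w]
  have hpref : (2 * Real.pi * s) ^ (-(1/2) : ℝ) ≤ 2 * (2 * Real.pi * (2 * t')) ^ (-(1/2) : ℝ) := by
    have := pref_le hs ht' (by linarith)
    exact this
  have h1 : G s w ≤ 2 * G (2 * t') w := by
    unfold G
    calc (2 * Real.pi * s) ^ (-(1/2) : ℝ) * Real.exp (-w ^ 2 / (2 * s))
        ≤ (2 * (2 * Real.pi * (2 * t')) ^ (-(1/2) : ℝ)) * Real.exp (-w ^ 2 / (2 * (2 * t'))) := by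
          apply mul_le_mul hpref hexp (Real.exp_pos _).le
          positivity
      _ = 2 * ((2 * Real.pi * (2 * t')) ^ (-(1/2) : ℝ) * Real.exp (-w ^ 2 / (2 * (2 * t')))) := by
          ring
  have hinv : 1 / (2 * s) ≤ t⁻¹ := by
    rw [div_le_iff₀ (by positivity)]
    rw [inv_mul_eq_div, le_div_iff₀ ht]
    linarith
  have hG2 : 0 < G (2 * t') w := G_pos (by positivity) w
  calc G s w * (1 / (2 * s)) ≤ (2 * G (2 * t') w) * t⁻¹ :=
        mul_le_mul h1 hinv (by positivity) (by linarith)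
    _ = 2 * t⁻¹ * G (2 * t') w := by ring

lemma claimA {t t' s : ℝ} (w : ℝ) (ht : 0 < t) (hts : t ≤ s) (hst : s ≤ t') (h2 : t' ≤ 2 * t) :
    G s w * (w ^ 2 / (2 * s ^ 2)) ≤ 2 * t⁻¹ * G (2 * t') w := by
  have hs : 0 < s := ht.trans_le hts
  have ht' : 0 < t' := hs.trans_le hst
  set x := w ^ 2 / (2 * s) with hx
  have hx0 : 0 ≤ x := by positivity
  have key : x * Real.exp (-x) ≤ Real.exp (-(x/2)) := x_exp_neg x hx0
  have hG : G s w * (w ^ 2 / (2 * s ^ 2))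
      = s⁻¹ * ((2 * Real.pi * s) ^ (-(1/2) : ℝ) * (x * Real.exp (-x))) := by
    unfold G
    have : -w ^ 2 / (2 * s) = -x := by rw [hx]; ring
    rw [this, hx]
    field_simp
  rw [hG]
  have hexp : Real.exp (-(x/2)) ≤ Real.exp (-w ^ 2 / (2 * (2 * t'))) := by
    apply Real.exp_le_exp.mpr
    rw [hx, show -w ^ 2 / (2 * (2 * t')) = -(w ^ 2 / (4 * t')) by ring,
      show -(w ^ 2 / (2 * s) / 2) = -(w ^ 2 / (4 * s)) by ring]
    apply neg_le_neg
    rw [div_le_div_iff₀ (by positivity) (by positivity)]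
    nlinarith [sq_nonneg w]
  have hpref : (2 * Real.pi * s) ^ (-(1/2) : ℝ) ≤ 2 * (2 * Real.pi * (2 * t')) ^ (-(1/2) : ℝ) :=
    pref_le hs ht' (by linarith)
  have hsinv : s⁻¹ ≤ t⁻¹ := by
    apply inv_anti₀ ht hts
  have hstep : (2 * Real.pi * s) ^ (-(1/2) : ℝ) * (x * Real.exp (-x))
      ≤ 2 * G (2 * t') w := by
    unfold G
    calc (2 * Real.pi * s) ^ (-(1/2) : ℝ) * (x * Real.exp (-x))
        ≤ (2 * (2 * Real.pi * (2 * t')) ^ (-(1/2) : ℝ)) * Real.exp (-w ^ 2 / (2 * (2 * t'))) := by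
          apply mul_le_mul hpref (key.trans hexp) (by positivity) (by positivity)
      _ = 2 * ((2 * Real.pi * (2 * t')) ^ (-(1/2) : ℝ) * Real.exp (-w ^ 2 / (2 * (2 * t')))) := by
          ring
  calc s⁻¹ * ((2 * Real.pi * s) ^ (-(1/2) : ℝ) * (x * Real.exp (-x)))
      ≤ t⁻¹ * (2 * G (2 * t') w) := by
        apply mul_le_mul hsinv hstep (by positivity) (by positivity)

    _ = 2 * t⁻¹ * G (2 * t') w := by ring

/-- Time-increment bound for the heat kernel. -/
theorem heat_kernel_time_increment :
    ∃ C : ℝ, 0 < C ∧ ∀ t t' : ℝ, 0 < t → t ≤ t' → ∀ w : ℝ,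
      |G t w - G t' w| ≤ C * t⁻¹ * |t - t'| * (G t w + G (2 * t') w) := by
  refine ⟨4, by norm_num, ?_⟩
  intro t t' ht htt' w
  have ht' : 0 < t' := ht.trans_le htt'
  have hGt := G_pos ht w
  have hGt' := G_pos ht' w
  have hG2t' := G_pos (by positivity : (0:ℝ) < 2 * t') w
  have habs : |t - t'| = t' - t := by rw [abs_sub_comm]; exact abs_of_nonneg (by linarith)
  rcases le_or_gt t' (2 * t) with hcase | hcase
  · -- t ≤ t' ≤ 2t : mean value theorem
    set C₀ := 4 * t⁻¹ * G (2 * t') w with hC₀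
    have hbound : ∀ s ∈ Set.Icc t t',
        ‖G s w * (w ^ 2 / (2 * s ^ 2) - 1 / (2 * s))‖ ≤ C₀ := by
      intro s hsm
      obtain ⟨hts, hst⟩ := hsm
      have hs : 0 < s := ht.trans_le hts
      have hGs := G_pos hs w
      rw [Real.norm_eq_abs, abs_mul, abs_of_pos hGs]
      have h1 : |w ^ 2 / (2 * s ^ 2) - 1 / (2 * s)| ≤ w ^ 2 / (2 * s ^ 2) + 1 / (2 * s) := by
        apply (abs_sub _ _).trans
        rw [abs_of_nonneg (by positivity), abs_of_nonneg (by positivity)]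
      calc G s w * |w ^ 2 / (2 * s ^ 2) - 1 / (2 * s)|
          ≤ G s w * (w ^ 2 / (2 * s ^ 2) + 1 / (2 * s)) := by
            exact mul_le_mul_of_nonneg_left h1 hGs.le
        _ = G s w * (w ^ 2 / (2 * s ^ 2)) + G s w * (1 / (2 * s)) := by ring
        _ ≤ 2 * t⁻¹ * G (2 * t') w + 2 * t⁻¹ * G (2 * t') w :=
            add_le_add (claimA w ht hts hst hcase) (claimB w ht hts hst hcase)
        _ = C₀ := by rw [hC₀]; ring
    have hderiv : ∀ s ∈ Set.Icc t t',
        HasDerivWithinAt (fun s => G s w)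
          (G s w * (w ^ 2 / (2 * s ^ 2) - 1 / (2 * s))) (Set.Icc t t') s := by
      intro s hsm
      exact (G_deriv w (ht.trans_le hsm.1)).hasDerivWithinAt
    have hmvt := (convex_Icc t t').norm_image_sub_le_of_norm_hasDerivWithin_le
      hderiv hbound (Set.left_mem_Icc.mpr htt') (Set.right_mem_Icc.mpr htt')
    rw [Real.norm_eq_abs, Real.norm_eq_abs] at hmvt
    have h2 : |G t' w - G t w| = |G t w - G t' w| := abs_sub_comm _ _
    have h3 : |t' - t| = |t - t'| := abs_sub_comm _ _
    rw [h2, h3] at hmvt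
    calc |G t w - G t' w| ≤ C₀ * |t - t'| := hmvt
      _ = 4 * t⁻¹ * |t - t'| * G (2 * t') w := by rw [hC₀]; ring
      _ ≤ 4 * t⁻¹ * |t - t'| * (G t w + G (2 * t') w) := by
          apply mul_le_mul_of_nonneg_left (by linarith)
          positivity
  · -- 2t < t' : crude bound
    have hfac : 1 ≤ t⁻¹ * |t - t'| := by
      rw [habs, inv_mul_eq_div, le_div_iff₀ ht]
      linarith
    have hGt'le : G t' w ≤ 2 * G (2 * t') w := by
      unfold G
      have hexp : Real.exp (-w ^ 2 / (2 * t')) ≤ Real.exp (-w ^ 2 / (2 * (2 * t'))) := by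
        apply Real.exp_le_exp.mpr
        rw [div_le_div_iff₀ (by positivity) (by positivity)]
        nlinarith [sq_nonneg w]
      have hpref := pref_le ht' ht' (by linarith)
      calc (2 * Real.pi * t') ^ (-(1/2) : ℝ) * Real.exp (-w ^ 2 / (2 * t'))
          ≤ (2 * (2 * Real.pi * (2 * t')) ^ (-(1/2) : ℝ)) * Real.exp (-w ^ 2 / (2 * (2 * t'))) :=
            mul_le_mul hpref hexp (Real.exp_pos _).le (by positivity)
        _ = 2 * ((2 * Real.pi * (2 * t')) ^ (-(1/2) : ℝ) * Real.exp (-w ^ 2 / (2 * (2 * t')))) := by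
            ring
    have h1 : |G t w - G t' w| ≤ G t w + G t' w := by
      apply (abs_sub _ _).trans
      rw [abs_of_pos hGt, abs_of_pos hGt']
    have h2 : G t w + G t' w ≤ 2 * (G t w + G (2 * t') w) := by linarith
    calc |G t w - G t' w| ≤ 2 * (G t w + G (2 * t') w) := h1.trans h2
      _ = 2 * 1 * (G t w + G (2 * t') w) := by ring
      _ ≤ 2 * (2 * (t⁻¹ * |t - t'|)) * (G t w + G (2 * t') w) := by
          apply mul_le_mul_of_nonneg_right _ (by positivity)
          have : (1:ℝ) ≤ 2 * (t⁻¹ * |t - t'|) := by linarith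
          linarith
      _ = 4 * t⁻¹ * |t - t'| * (G t w + G (2 * t') w) := by ring
end

section
/- Let η ∈ (0,1) and let μ be a finite Borel measure on ℝ such that sup_{x ∈ ℝ} ∫_ℝ |x - y|^{-η + ε} μ(dy) < ∞ for every ε > 0. Then for every T > 0, ν₁ ∈ (0, 1/2), and λ > 0 there is a constant C > 0 such that for all x ∈ ℝ and t ∈ (0, T]: ∫_ℝ e^{λ|x-y|} G_t(x-y) 1_{{|x-y| > t^{1/2 - ν₁}}} μ(dy) ≤ C · exp( t/4 - t^{-2ν₁}/32 ). -/
open Real MeasureTheory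

private lemma pow_le_exp_aux (n : ℕ) (hn : 1 ≤ n) (v : ℝ) (hv : 0 ≤ v) :
    v ^ n ≤ (n : ℝ) ^ n * Real.exp v := by
  have hn0 : (0 : ℝ) < n := by exact_mod_cast hn
  have h1 : v ≤ (n : ℝ) * Real.exp (v / n) := by
    have := Real.add_one_le_exp (v / n)
    have h2 : (n : ℝ) * (v / n + 1) ≤ (n : ℝ) * Real.exp (v / n) := by
      exact mul_le_mul_of_nonneg_left this hn0.le
    have h3 : (n : ℝ) * (v / n + 1) = v + n := by field_simp
    nlinarith
  calc v ^ n ≤ ((n : ℝ) * Real.exp (v / n)) ^ n := pow_le_pow_left₀ hv h1 n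
    _ = (n : ℝ) ^ n * Real.exp (v / n) ^ n := mul_pow _ _ n
    _ = (n : ℝ) ^ n * Real.exp v := by
        rw [← Real.exp_nat_mul]
        congr 1
        field_simp

private lemma pointwise_bound (T ν₁ lam t z : ℝ) (hT : 0 < T) (hν₁ : 0 < ν₁)
    (ht : 0 < t) (htT : t ≤ T) (hz : t ^ ((1 : ℝ)/2 - ν₁) < z) :
    Real.exp (lam * z) * G t z ≤
      ((2 * Real.pi) ^ (-(1/2) : ℝ) * Real.exp (lam ^ 2 * T) *
        (T ^ (-(2 * ν₁))) ^ ((1 / (4 * ν₁)) - (⌈1 / (4 * ν₁)⌉₊ : ℝ)) *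
        8 ^ ⌈1 / (4 * ν₁)⌉₊ * (⌈1 / (4 * ν₁)⌉₊ : ℝ) ^ ⌈1 / (4 * ν₁)⌉₊) *
      Real.exp (t / 4 - t ^ (-(2 * ν₁)) / 32) := by
  set a : ℝ := 1 / (4 * ν₁) with ha
  set n : ℕ := ⌈a⌉₊ with hn
  have ha0 : 0 < a := by positivity
  have hn1 : 1 ≤ n := Nat.one_le_ceil_iff.mpr ha0
  have han : a ≤ (n : ℝ) := Nat.le_ceil a
  set u : ℝ := t ^ (-(2 * ν₁)) with hu
  set u0 : ℝ := T ^ (-(2 * ν₁)) with hu0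
  have hu_pos : 0 < u := Real.rpow_pos_of_pos ht _
  have hu0_pos : 0 < u0 := Real.rpow_pos_of_pos hT _
  have huu0 : u0 ≤ u := Real.rpow_le_rpow_of_nonpos ht htT (by nlinarith)
  have hz0 : 0 < z := lt_of_le_of_lt (Real.rpow_nonneg ht.le _) hz
  -- exponent bound : lam*z - z^2/(2t) ≤ lam^2*T - u/4
  have hz2 : t ^ ((1:ℝ) - 2 * ν₁) ≤ z ^ 2 := by
    have : (t ^ ((1:ℝ)/2 - ν₁)) ^ 2 ≤ z ^ 2 := by
      apply pow_le_pow_left₀ (Real.rpow_nonneg ht.le _) hz.le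
    calc t ^ ((1:ℝ) - 2 * ν₁) = (t ^ ((1:ℝ)/2 - ν₁)) ^ (2:ℕ) := by
          rw [← Real.rpow_natCast (t ^ ((1:ℝ)/2 - ν₁)) 2, ← Real.rpow_mul ht.le]
          norm_num
          ring_nf
      _ ≤ z ^ 2 := this
  have hut : t ^ ((1:ℝ) - 2 * ν₁) = u * t := by
    rw [hu, ← Real.rpow_add_one ht.ne']
    ring_nf
  have hexp_bound : lam * z - z ^ 2 / (2 * t) ≤ lam ^ 2 * T - u / 4 := by
    have h1 : lam * z - z ^ 2 / (4 * t) ≤ lam ^ 2 * t := by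
      have hid : z ^ 2 / (4 * t) * (4 * t) = z ^ 2 := by field_simp
      nlinarith [sq_nonneg (2 * lam * t - z), ht]
    have h2 : u / 4 ≤ z ^ 2 / (4 * t) := by
      rw [div_le_div_iff₀ (by norm_num) (by positivity)]
      nlinarith [hz2, hut]
    have h3 : lam ^ 2 * t ≤ lam ^ 2 * T := by nlinarith [sq_nonneg lam]
    have hsplit : lam * z - z ^ 2 / (2 * t) =
        (lam * z - z ^ 2 / (4 * t)) - z ^ 2 / (4 * t) := by ring
    linarith
  -- kernel prefactor
  have hprefac : (2 * Real.pi * t) ^ (-(1/2) : ℝ)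
      = (2 * Real.pi) ^ (-(1/2) : ℝ) * u ^ a := by
    rw [Real.mul_rpow (by positivity) ht.le]
    congr 1
    rw [hu, ← Real.rpow_mul ht.le]
    rw [ha]
    congr 1
    field_simp
    ring
  -- u ^ a ≤ u0 ^ (a - n) * u ^ n
  have hua : u ^ a ≤ u0 ^ (a - (n : ℝ)) * u ^ n := by
    have : u ^ a = u ^ (a - (n : ℝ)) * u ^ n := by
      rw [← Real.rpow_natCast u n, ← Real.rpow_add hu_pos]
      ring_nf
    rw [this]
    apply mul_le_mul_of_nonneg_right _ (by positivity)
    exact Real.rpow_le_rpow_of_nonpos hu0_pos huu0 (by linarith)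
  -- u ^ n * exp(-u/4) ≤ 8^n * n^n * exp(-u/32)
  have hun : u ^ n * Real.exp (-(u / 4)) ≤
      (8:ℝ) ^ n * (n : ℝ) ^ n * Real.exp (-(u / 32)) := by
    have h1 : u ^ n ≤ (8:ℝ) ^ n * ((n:ℝ) ^ n * Real.exp (u / 8)) := by
      have := pow_le_exp_aux n hn1 (u / 8) (by positivity)
      calc u ^ n = (8:ℝ) ^ n * (u / 8) ^ n := by
            rw [← mul_pow]; congr 1; field_simp
        _ ≤ (8:ℝ) ^ n * ((n:ℝ) ^ n * Real.exp (u / 8)) := by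
            apply mul_le_mul_of_nonneg_left this (by positivity)
    calc u ^ n * Real.exp (-(u / 4))
        ≤ ((8:ℝ) ^ n * ((n:ℝ) ^ n * Real.exp (u / 8))) * Real.exp (-(u / 4)) := by
          apply mul_le_mul_of_nonneg_right h1 (Real.exp_nonneg _)
      _ = (8:ℝ) ^ n * (n : ℝ) ^ n * Real.exp (u / 8 - u / 4) := by
          rw [Real.exp_sub, Real.exp_neg]
          field_simp
      _ ≤ (8:ℝ) ^ n * (n : ℝ) ^ n * Real.exp (-(u / 32)) := by
          apply mul_le_mul_of_nonneg_left _ (by positivity)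
          apply Real.exp_le_exp.mpr
          linarith
  -- main calc
  have hG : G t z = (2 * Real.pi) ^ (-(1/2) : ℝ) * u ^ a * Real.exp (-z ^ 2 / (2 * t)) := by
    rw [G, hprefac]
  calc Real.exp (lam * z) * G t z
      = (2 * Real.pi) ^ (-(1/2) : ℝ) * u ^ a * Real.exp (lam * z - z ^ 2 / (2 * t)) := by
        rw [hG, show lam * z - z ^ 2 / (2 * t) = lam * z + -z ^ 2 / (2 * t) by ring,
          Real.exp_add]
        ring
    _ ≤ (2 * Real.pi) ^ (-(1/2) : ℝ) * (u0 ^ (a - (n : ℝ)) * u ^ n) *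
          Real.exp (lam ^ 2 * T - u / 4) := by
        apply mul_le_mul
        · exact mul_le_mul_of_nonneg_left hua (by positivity)
        · exact Real.exp_le_exp.mpr hexp_bound
        · exact Real.exp_nonneg _
        · positivity
    _ = (2 * Real.pi) ^ (-(1/2) : ℝ) * Real.exp (lam ^ 2 * T) * u0 ^ (a - (n : ℝ)) *
          (u ^ n * Real.exp (-(u / 4))) := by
        rw [Real.exp_sub]
        rw [Real.exp_neg]
        field_simp
    _ ≤ (2 * Real.pi) ^ (-(1/2) : ℝ) * Real.exp (lam ^ 2 * T) * u0 ^ (a - (n : ℝ)) *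
          ((8:ℝ) ^ n * (n : ℝ) ^ n * Real.exp (-(u / 32))) := by
        apply mul_le_mul_of_nonneg_left hun (by positivity)
    _ ≤ ((2 * Real.pi) ^ (-(1/2) : ℝ) * Real.exp (lam ^ 2 * T) * u0 ^ (a - (n : ℝ)) *
          8 ^ n * (n : ℝ) ^ n) * Real.exp (t / 4 - u / 32) := by
        have : Real.exp (-(u / 32)) ≤ Real.exp (t / 4 - u / 32) := by
          apply Real.exp_le_exp.mpr; linarith
        calc (2 * Real.pi) ^ (-(1/2) : ℝ) * Real.exp (lam ^ 2 * T) * u0 ^ (a - (n : ℝ)) *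
              ((8:ℝ) ^ n * (n : ℝ) ^ n * Real.exp (-(u / 32)))
            = ((2 * Real.pi) ^ (-(1/2) : ℝ) * Real.exp (lam ^ 2 * T) * u0 ^ (a - (n : ℝ)) *
              8 ^ n * (n : ℝ) ^ n) * Real.exp (-(u / 32)) := by ring
          _ ≤ _ := mul_le_mul_of_nonneg_left this (by positivity)

/-- Lemma: Gaussian tail integral against a measure with bounded (η-ε)-potentials. -/
theorem heat_kernel_tail_fractal_bound (η : ℝ) (hη : η ∈ Set.Ioo (0 : ℝ) 1)
    (μ : Measure ℝ) [IsFiniteMeasure μ]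
    (hpot : ∀ ε > 0, ∃ B : ℝ, ∀ x : ℝ,
      ∫⁻ y, ENNReal.ofReal (|x - y| ^ (-η + ε)) ∂μ ≤ ENNReal.ofReal B)
    (T ν₁ lam : ℝ) (hT : 0 < T) (hν : ν₁ ∈ Set.Ioo (0 : ℝ) (1/2)) (hlam : 0 < lam) :
    ∃ C : ℝ, 0 < C ∧ ∀ x : ℝ, ∀ t ∈ Set.Ioc (0 : ℝ) T,
      (∫⁻ y in {y : ℝ | t ^ ((1 : ℝ)/2 - ν₁) < |x - y|},
          ENNReal.ofReal (Real.exp (lam * |x - y|) * G t (x - y)) ∂μ) ≤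
        ENNReal.ofReal (C * Real.exp (t / 4 - t ^ (-(2 * ν₁)) / 32)) := by
  obtain ⟨hν₁, hν₂⟩ := hν
  set K : ℝ := (2 * Real.pi) ^ (-(1/2) : ℝ) * Real.exp (lam ^ 2 * T) *
      (T ^ (-(2 * ν₁))) ^ ((1 / (4 * ν₁)) - (⌈1 / (4 * ν₁)⌉₊ : ℝ)) *
      8 ^ ⌈1 / (4 * ν₁)⌉₊ * (⌈1 / (4 * ν₁)⌉₊ : ℝ) ^ ⌈1 / (4 * ν₁)⌉₊ with hK
  have hn1 : 1 ≤ ⌈1 / (4 * ν₁)⌉₊ := Nat.one_le_ceil_iff.mpr (by positivity)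
  have hKpos : 0 < K := by
    rw [hK]
    have h1 : (0:ℝ) < (2 * Real.pi) ^ (-(1/2) : ℝ) := Real.rpow_pos_of_pos (by positivity) _
    have h2 : (0:ℝ) < (T ^ (-(2 * ν₁))) ^ ((1 / (4 * ν₁)) - (⌈1 / (4 * ν₁)⌉₊ : ℝ)) :=
      Real.rpow_pos_of_pos (Real.rpow_pos_of_pos hT _) _
    have h3 : (0:ℝ) < (⌈1 / (4 * ν₁)⌉₊ : ℝ) := by exact_mod_cast hn1
    positivity
  refine ⟨K * ((μ Set.univ).toReal + 1), by positivity, fun x t ht => ?_⟩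
  obtain ⟨ht0, htT⟩ := ht
  set E := Real.exp (t / 4 - t ^ (-(2 * ν₁)) / 32) with hE
  have hEpos : 0 < E := Real.exp_pos _
  have hmeas : MeasurableSet {y : ℝ | t ^ ((1 : ℝ)/2 - ν₁) < |x - y|} := by
    apply measurableSet_lt measurable_const
    exact (measurable_const.sub measurable_id).abs
  calc (∫⁻ y in {y : ℝ | t ^ ((1 : ℝ)/2 - ν₁) < |x - y|},
          ENNReal.ofReal (Real.exp (lam * |x - y|) * G t (x - y)) ∂μ)
      ≤ ∫⁻ _ in {y : ℝ | t ^ ((1 : ℝ)/2 - ν₁) < |x - y|}, ENNReal.ofReal (K * E) ∂μ := by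
        apply setLIntegral_mono' hmeas
        intro y hy
        apply ENNReal.ofReal_le_ofReal
        have hGz : G t (x - y) = G t |x - y| := by simp [G, sq_abs]
        rw [hGz, hE]
        exact pointwise_bound T ν₁ lam t |x - y| hT hν₁ ht0 htT hy
    _ = ENNReal.ofReal (K * E) * μ {y : ℝ | t ^ ((1 : ℝ)/2 - ν₁) < |x - y|} :=
        setLIntegral_const _ _
    _ ≤ ENNReal.ofReal (K * E) * ENNReal.ofReal ((μ Set.univ).toReal) := by
        apply mul_le_mul_right
        rw [ENNReal.ofReal_toReal (measure_ne_top μ _)]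
        exact measure_mono (Set.subset_univ _)
    _ = ENNReal.ofReal (K * E * (μ Set.univ).toReal) :=
        (ENNReal.ofReal_mul (by positivity)).symm
    _ ≤ ENNReal.ofReal (K * ((μ Set.univ).toReal + 1) * E) := by
        apply ENNReal.ofReal_le_ofReal
        nlinarith [ENNReal.toReal_nonneg (a := μ Set.univ)]
end

section
/- Let η ∈ (0,1), α = 1/(η+1), and γ > 1 - η/(2(η+1)). Let (a_n) be any sequence with a_n ∈ (0,1], let β ∈ [0, η/(η+1)], d ∈ (0,1], and set γ₁ = γ + η/2 and γ̃ = min(η/(2(1-γ)), 1+η) (so that γ̃ - 1 ≥ η when the minimum is attained at 1+η). Then a_n^{βγ} · (max(a_n^α, d))^{γ₁ - 1} ≤ a_n^β + (max(d, a_n^α))^{η}. -/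
open Real

/-- Lemma 5.15: a^{βγ}(a^α ∨ d)^{γ-1+η/2} ≤ a^β + (d ∨ a^α)^η. -/
theorem key_arith_inequality (η α γ : ℝ) (hη : η ∈ Set.Ioo (0 : ℝ) 1)
    (hα : α = 1 / (η + 1))
    (hγ : 1 - η / (2 * (η + 1)) < γ) (hγ1 : γ ≤ 1)
    (a : ℝ) (ha : a ∈ Set.Ioc (0 : ℝ) 1)
    (β : ℝ) (hβ : β ∈ Set.Icc (0 : ℝ) (η / (η + 1)))
    (d : ℝ) (hd : d ∈ Set.Ioc (0 : ℝ) 1) :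
    a ^ (β * γ) * (max (a ^ α) d) ^ (γ + η / 2 - 1) ≤ a ^ β + (max d (a ^ α)) ^ η := by
  obtain ⟨hη0, hη1⟩ := hη
  obtain ⟨ha0, ha1⟩ := ha
  obtain ⟨hβ0, hβ1⟩ := hβ
  obtain ⟨hd0, hd1⟩ := hd
  have hη1' : (0:ℝ) < η + 1 := by linarith
  have hα0 : 0 < α := by rw [hα]; positivity
  set e : ℝ := γ + η / 2 - 1 with he_def
  have he0 : 0 < e := by
    have : η / (2 * (η + 1)) < η / 2 := by
      apply div_lt_div_of_pos_left hη0 (by linarith)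
      linarith
    simp only [he_def]; linarith
  have hγ0 : 0 < γ := by
    have : η / (2 * (η + 1)) < 1 := by
      rw [div_lt_one (by linarith)]; linarith
    linarith
  have h1γ : (1 - γ) * (2 * (η + 1)) < η := by
    have := hγ
    have h2 : 1 - γ < η / (2 * (η + 1)) := by linarith
    calc (1 - γ) * (2 * (η + 1)) < η / (2 * (η + 1)) * (2 * (η + 1)) := by
          apply mul_lt_mul_of_pos_right h2 (by linarith)
      _ = η := by field_simp
  rcases le_total d (a ^ α) with h | h
  · -- max = a^α; show LHS ≤ a^β
    rw [max_eq_left h, max_eq_right h]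
    have hpos : (0:ℝ) < (a ^ α) ^ η := by
      apply rpow_pos_of_pos (rpow_pos_of_pos ha0 α)
    have key : a ^ (β * γ) * (a ^ α) ^ e ≤ a ^ β := by
      rw [← Real.rpow_mul ha0.le, ← Real.rpow_add ha0]
      apply Real.rpow_le_rpow_of_exponent_ge ha0 ha1
      -- β ≤ β*γ + α*e, i.e. β*(1-γ) ≤ α*e
      rw [hα]
      have hβ1' : β * (η + 1) ≤ η := (le_div_iff₀ hη1').mp hβ1
      have h2 : β * (η + 1) * (1 - γ) ≤ η * (1 - γ) :=
        mul_le_mul_of_nonneg_right hβ1' (by linarith)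
      have h3 : β * (1 - γ) ≤ e / (η + 1) := by
        rw [le_div_iff₀ hη1', he_def]; nlinarith [h2, h1γ]
      have h4 : β * (1 - γ) ≤ 1 / (η + 1) * e := by
        rw [one_div, inv_mul_eq_div]; exact h3
      linarith [h4]
    linarith
  · -- max = d
    rw [max_eq_right h, max_eq_left h]
    rcases le_total (a ^ β) (d ^ η) with h2 | h2
    · -- LHS ≤ d^η
      have hdη : (0:ℝ) ≤ d ^ η := (rpow_pos_of_pos hd0 η).le
      have haβ : (0:ℝ) ≤ a ^ β := (rpow_pos_of_pos ha0 β).le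
      have s1 : a ^ (β * γ) ≤ d ^ (η * γ) := by
        rw [Real.rpow_mul ha0.le, Real.rpow_mul hd0.le]
        exact Real.rpow_le_rpow haβ h2 hγ0.le
      have s2 : a ^ (β * γ) * d ^ e ≤ d ^ (η * γ) * d ^ e := by
        apply mul_le_mul_of_nonneg_right s1 (rpow_pos_of_pos hd0 e).le
      have s3 : d ^ (η * γ) * d ^ e ≤ d ^ η := by
        rw [← Real.rpow_add hd0]
        apply Real.rpow_le_rpow_of_exponent_ge hd0 hd1
        rw [he_def]; nlinarith [h1γ]
      have haβ0 : (0:ℝ) < a ^ β := rpow_pos_of_pos ha0 β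
      linarith
    · -- LHS ≤ a^β
      have hηne : η ≠ 0 := ne_of_gt hη0
      have s1 : d ^ e ≤ a ^ (β * (e / η)) := by
        have : d ^ e = (d ^ η) ^ (e / η) := by
          rw [← Real.rpow_mul hd0.le]
          congr 1; field_simp
        rw [this, Real.rpow_mul ha0.le]
        exact Real.rpow_le_rpow (rpow_pos_of_pos hd0 η).le h2 (by positivity)
      have s2 : a ^ (β * γ) * d ^ e ≤ a ^ (β * γ) * a ^ (β * (e / η)) := by
        apply mul_le_mul_of_nonneg_left s1 (rpow_pos_of_pos ha0 _).le
      have s3 : a ^ (β * γ) * a ^ (β * (e / η)) ≤ a ^ β := by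
        rw [← Real.rpow_add ha0]
        apply Real.rpow_le_rpow_of_exponent_ge ha0 ha1
        -- β ≤ β*γ + β*(e/η), i.e. β*(1-γ) ≤ β*e/η
        have key : (1 - γ) ≤ e / η := by
          rw [le_div_iff₀ hη0, he_def]
          nlinarith [h1γ]
        nlinarith [mul_le_mul_of_nonneg_left key hβ0]
      have hdη0 : (0:ℝ) < d ^ η := rpow_pos_of_pos hd0 η
      linarith
end
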